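/- (Petridis' lemma) Let G be an Abelian group and A, X finite nonempty subsets of G such that |A+X| ≤ K|X| and |A+X'| ≥ K|X'| for every nonempty subset X' ⊆ X. Then for every finite set C ⊆ G, |A+X+C| ≤ K|X+C|. -/

import Mathlib

open Pointwise

theorem petridis_lemma {G : Type*} [AddCommGroup G] [DecidableEq G]
    (A X : Finset G) (hA : A.Nonempty) (hX : X.Nonempty) (K : ℝ) (hK : 0 < K)
    (h1 : ((A + X).card : ℝ) ≤ K * X.card)
    (h2 : ∀ X' ⊆ X, X'.Nonempty → K * X'.card ≤ ((A + X').card : ℝ)) :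
    ∀ C : Finset G, ((A + X + C).card : ℝ) ≤ K * (X + C).card := by
  intro C
  induction C using Finset.induction_on with
  | empty => simp
  | insert c C' hc ih =>
    classical
    set Y : Finset G := X.filter (fun x => x + c ∈ X + C') with hYdef
    have hYX : Y ⊆ X := Finset.filter_subset _ _
    -- decomposition of X + insert c C'
    have hins : (insert c C' : Finset G) = C' ∪ {c} := by
      ext z; simp [or_comm]
    have key1 : X + insert c C' = (X + C') ∪ ((X \ Y) + {c}) := by
      rw [hins, Finset.add_union]
      ext z
      simp only [Finset.mem_union, Finset.mem_add, Finset.mem_sdiff, Finset.mem_singleton,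
        hYdef, Finset.mem_filter]
      constructor
      · rintro (h | ⟨x, hx, d, hd, rfl⟩)
        · exact Or.inl h
        · subst d
          by_cases hxc : x + c ∈ X + C'
          · obtain ⟨x', hx', d', hd', he⟩ := Finset.mem_add.1 hxc
            exact Or.inl ⟨x', hx', d', hd', he⟩
          · exact Or.inr ⟨x, ⟨hx, fun h => hxc (Finset.mem_add.2 h.2)⟩, c, rfl, rfl⟩
      · rintro (h | ⟨x, hx, d, hd, rfl⟩)
        · exact Or.inl h
        · subst d
          exact Or.inr ⟨x, hx.1, c, rfl, rfl⟩
    have hdisj : Disjoint (X + C') ((X \ Y) + {c}) := by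
      rw [Finset.disjoint_right]
      rintro z hz hz'
      obtain ⟨x, hx, d, hd, rfl⟩ := Finset.mem_add.1 hz
      rw [Finset.mem_singleton] at hd
      subst d
      rw [Finset.mem_sdiff, hYdef, Finset.mem_filter] at hx
      exact hx.2 ⟨hx.1, hz'⟩
    have hcard1 : (X + insert c C').card = (X + C').card + (X.card - Y.card) := by
      rw [key1, Finset.card_union_of_disjoint hdisj, Finset.card_add_singleton,
        Finset.card_sdiff_of_subset hYX]
    -- A + Y + {c} ⊆ A + X + C'
    have hsub : A + Y + {c} ⊆ A + X + C' := by
      intro z hz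
      obtain ⟨w, hw, d, hd, rfl⟩ := Finset.mem_add.1 hz
      rw [Finset.mem_singleton] at hd; subst d
      obtain ⟨a, ha, y, hy, rfl⟩ := Finset.mem_add.1 hw
      rw [hYdef, Finset.mem_filter] at hy
      obtain ⟨x, hx, d', hd', he⟩ := Finset.mem_add.1 hy.2
      have : a + y + c = a + x + d' := by rw [add_assoc, ← he, add_assoc]
      rw [this]
      exact Finset.add_mem_add (Finset.add_mem_add ha hx) hd'
    have hsub2 : A + Y + {c} ⊆ A + X + {c} :=
      Finset.add_subset_add_right (Finset.add_subset_add_left hYX)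
    have key2 : A + X + insert c C' ⊆ (A + X + C') ∪ ((A + X + {c}) \ (A + Y + {c})) := by
      rw [hins, Finset.add_union]
      apply Finset.union_subset
      · exact Finset.subset_union_left
      · intro z hz
        rw [Finset.mem_union, Finset.mem_sdiff]
        by_cases h : z ∈ A + Y + {c}
        · exact Or.inl (hsub h)
        · exact Or.inr ⟨hz, h⟩
    -- cardinalities
    have hcard2 : ((A + X + insert c C').card : ℝ) ≤
        (A + X + C').card + ((A + X).card - (A + Y).card) := by
      have h3 : ((A + X + {c}) \ (A + Y + {c})).card
          = (A + X + {c}).card - (A + Y + {c}).card := Finset.card_sdiff_of_subset hsub2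
      have h5 := Finset.card_le_card key2
      have h6 := Finset.card_union_le (A + X + C') ((A + X + {c}) \ (A + Y + {c}))
      have h7 : (A + Y + {c}).card ≤ (A + X + {c}).card := Finset.card_le_card hsub2
      have h8 : (A + Y).card ≤ (A + X).card := by
        simpa [Finset.card_add_singleton] using h7
      have h9 := le_trans h5 h6
      rw [h3, Finset.card_add_singleton, Finset.card_add_singleton] at h9
      have hfin : ((A + X + insert c C').card : ℝ)
          ≤ (((A + X + C').card + ((A + X).card - (A + Y).card) : ℕ) : ℝ) := by
        exact_mod_cast h9
      rw [Nat.cast_add, Nat.cast_sub h8] at hfin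
      exact hfin
    -- lower bounds via K
    have hAY : K * Y.card ≤ ((A + Y).card : ℝ) := by
      rcases Y.eq_empty_or_nonempty with h | h
      · simp [h]
      · exact h2 Y hYX h
    have hYle : (Y.card : ℝ) ≤ X.card := by
      exact_mod_cast Finset.card_le_card hYX
    calc ((A + X + insert c C').card : ℝ)
        ≤ (A + X + C').card + ((A + X).card - (A + Y).card) := hcard2
      _ ≤ K * (X + C').card + (K * X.card - K * Y.card) := by linarith
      _ = K * ((X + C').card + (X.card - Y.card)) := by ring
      _ = K * (X + insert c C').card := by
          rw [hcard1]
          push_cast [Nat.cast_sub (Finset.card_le_card hYX)]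
          ring
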